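/- For ρ > 0, the series Σ_{j=1}^∞ (2ρ/((2πj)² + ρ²))² equals (ρ² + ρ·sinh(ρ) - 4cosh(ρ) + 4) / (2ρ²(cosh(ρ) - 1)). -/

import Mathlib

open Real
open MeasureTheory intervalIntegral

noncomputable def gfun (ρ : ℝ) : ℝ → ℂ := fun x => (Real.cosh (ρ * (x - 1/2)) : ℂ)

lemma gfun_endpoints (ρ : ℝ) : gfun ρ 0 = gfun ρ (0 + 1) := by simp [gfun]; norm_num

instance fact_zero_lt_one_real : Fact ((0:ℝ) < 1) := ⟨zero_lt_one⟩

lemma coeff_integral (ρ : ℝ) (hρ : 0 < ρ) (n : ℤ) :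
    fourierCoeffOn (zero_lt_one) (gfun ρ) n
      = ((Real.sinh (ρ/2) * (2 * ρ / (ρ^2 + (2*π*n)^2)) : ℝ) : ℂ) := by
  rw [fourierCoeffOn_eq_integral]
  simp only [gfun]
  have c1 : (ρ : ℂ) - 2*π*Complex.I*n ≠ 0 := by
    intro h
    have := congrArg Complex.re h
    simp [Complex.sub_re, Complex.mul_re] at this
    nlinarith [Real.pi_pos]
  have c2 : -(ρ : ℂ) - 2*π*Complex.I*n ≠ 0 := by
    intro h
    have := congrArg Complex.re h
    simp [Complex.sub_re, Complex.mul_re] at this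
    nlinarith [Real.pi_pos]
  have hint : ∀ x ∈ Set.uIcc (0:ℝ) 1,
      fourier (-n) ((x : ℝ) : AddCircle (1 - 0 : ℝ)) • ((Real.cosh (ρ * (x - 1/2)) : ℝ) : ℂ)
        = Complex.exp (-(ρ:ℂ)/2)/2 * Complex.exp ((ρ - 2*π*Complex.I*n) * x)
          + Complex.exp ((ρ:ℂ)/2)/2 * Complex.exp ((-ρ - 2*π*Complex.I*n) * x) := by
    intro x hx
    rw [show ((1:ℝ) - 0) = 1 by norm_num, fourier_coe_apply]
    push_cast
    rw [smul_eq_mul, show ∀ z:ℂ, Complex.cosh z = (Complex.exp z + Complex.exp (-z))/2 from fun z => rfl, ← mul_div_assoc, mul_add, ← Complex.exp_add,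
      ← Complex.exp_add, div_mul_eq_mul_div, div_mul_eq_mul_div,
      ← Complex.exp_add, ← Complex.exp_add, ← add_div]
    congr 2 <;> ring
  rw [intervalIntegral.integral_congr hint]
  have i1 : IntervalIntegrable (fun x : ℝ => Complex.exp (-(ρ:ℂ)/2)/2 * Complex.exp ((ρ - 2*π*Complex.I*n) * x)) volume 0 1 :=
    (Continuous.intervalIntegrable (by continuity) 0 1)
  have i2 : IntervalIntegrable (fun x : ℝ => Complex.exp ((ρ:ℂ)/2)/2 * Complex.exp ((-ρ - 2*π*Complex.I*n) * x)) volume 0 1 :=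
    (Continuous.intervalIntegrable (by continuity) 0 1)
  rw [intervalIntegral.integral_add i1 i2, intervalIntegral.integral_const_mul,
    intervalIntegral.integral_const_mul, integral_exp_mul_complex c1, integral_exp_mul_complex c2]
  have he1 : Complex.exp (((ρ:ℂ) - 2*π*Complex.I*n) * 1) = Complex.exp ρ := by
    rw [mul_one, Complex.exp_sub, show (2*(π:ℂ)*Complex.I*(n:ℂ)) = n * (2*π*Complex.I) by ring,
      Complex.exp_int_mul_two_pi_mul_I, div_one]
  have he2 : Complex.exp ((-(ρ:ℂ) - 2*π*Complex.I*n) * 1) = Complex.exp (-ρ) := by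
    rw [mul_one, Complex.exp_sub, show (2*(π:ℂ)*Complex.I*(n:ℂ)) = n * (2*π*Complex.I) by ring,
      Complex.exp_int_mul_two_pi_mul_I, div_one]
  simp only [Complex.ofReal_one, Complex.ofReal_zero]
  rw [he1, he2]
  simp only [mul_zero, Complex.exp_zero]
  have c3 : (ρ:ℂ) + 2*π*Complex.I*n ≠ 0 := fun h => c2 (by linear_combination -h)
  have hr : Complex.exp (ρ:ℂ) = Complex.exp ((ρ:ℂ)/2) * Complex.exp ((ρ:ℂ)/2) := by
    rw [← Complex.exp_add]; norm_num
  have hrn : Complex.exp (-(ρ:ℂ)) = Complex.exp (-(ρ:ℂ)/2) * Complex.exp (-(ρ:ℂ)/2) := by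
    rw [← Complex.exp_add]; ring_nf
  have hprod : Complex.exp ((ρ:ℂ)/2) * Complex.exp (-(ρ:ℂ)/2) = 1 := by
    rw [← Complex.exp_add]; ring_nf; exact Complex.exp_zero
  have k1 : Complex.exp (-(ρ:ℂ)/2) * (Complex.exp (ρ:ℂ) - 1)
      = Complex.exp ((ρ:ℂ)/2) - Complex.exp (-(ρ:ℂ)/2) := by
    rw [hr]; linear_combination Complex.exp ((ρ:ℂ)/2) * hprod
  have k2 : Complex.exp ((ρ:ℂ)/2) * (Complex.exp (-(ρ:ℂ)) - 1)
      = -(Complex.exp ((ρ:ℂ)/2) - Complex.exp (-(ρ:ℂ)/2)) := by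
    rw [hrn]; linear_combination Complex.exp (-(ρ:ℂ)/2) * hprod
  have hw2 : ((ρ:ℂ)^2 + (2*π*(n:ℂ))^2)
      = ((ρ:ℂ) - 2*π*Complex.I*n) * ((ρ:ℂ) + 2*π*Complex.I*n) := by
    have hI : (Complex.I)^2 = -1 := Complex.I_sq
    linear_combination (2*(π:ℂ)*(n:ℂ))^2 * hI
  push_cast
  rw [show Complex.sinh ((ρ:ℂ)/2)
      = (Complex.exp ((ρ:ℂ)/2) - Complex.exp (-((ρ:ℂ)/2)))/2 from rfl]
  rw [show (1:ℝ)/(1-0) = 1 by norm_num, one_smul]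
  rw [div_mul_div_comm, div_mul_div_comm, k1, k2, hw2]
  field_simp
  ring

lemma cosh_sq_integral (ρ : ℝ) (hρ : 0 < ρ) :
    ∫ x in (0:ℝ)..1, (Real.cosh (ρ * (x - 1/2)))^2
      = 1/2 + Real.sinh ρ / (2*ρ) := by
  have key : ∀ x ∈ Set.uIcc (0:ℝ) 1,
      HasDerivAt (fun y : ℝ => y/2 + Real.sinh (2*ρ*(y - 1/2))/(4*ρ))
        ((Real.cosh (ρ * (x - 1/2)))^2) x := by
    intro x _
    have h1 : HasDerivAt (fun y : ℝ => 2*ρ*(y - 1/2)) (2*ρ) x := by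
      exact (((hasDerivAt_id x).sub_const (1/2)).const_mul (2*ρ)).congr_deriv (mul_one _)
    have h2 := ((h1.sinh).div_const (4*ρ))
    have h3 := ((hasDerivAt_id x).div_const 2).add h2
    refine h3.congr_deriv ?_
    rw [Real.cosh_sq', show 2*ρ*(x-1/2) = 2*(ρ*(x-1/2)) by ring, Real.cosh_two_mul,
      Real.cosh_sq]
    field_simp
    ring
  rw [intervalIntegral.integral_eq_sub_of_hasDerivAt key
    ((Continuous.intervalIntegrable (by continuity) 0 1))]
  norm_num
  rw [show 2*ρ*(1/2) = ρ by ring]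
  field_simp
  ring

open MeasureTheory in
lemma parseval_eq (ρ : ℝ) (hρ : 0 < ρ) :
    ∑' n : ℤ, ‖((Real.sinh (ρ/2) * (2 * ρ / (ρ^2 + (2*π*n)^2)) : ℝ) : ℂ)‖^2
      = 1/2 + Real.sinh ρ / (2*ρ) := by
  have hcont : Continuous (AddCircle.liftIco 1 0 (gfun ρ)) :=
    AddCircle.liftIco_zero_continuous (by simpa using gfun_endpoints ρ)
      (Continuous.continuousOn (by unfold gfun; continuity))
  set G : C(AddCircle (1:ℝ), ℂ) := ⟨AddCircle.liftIco 1 0 (gfun ρ), hcont⟩ with hG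
  have hcoeff : ∀ n : ℤ, fourierCoeff (⇑G) n
      = ((Real.sinh (ρ/2) * (2 * ρ / (ρ^2 + (2*π*n)^2)) : ℝ) : ℂ) := by
    intro n
    have : fourierCoeff (⇑G) n
        = fourierCoeff (AddCircle.liftIco 1 0 (gfun ρ)) n := rfl
    rw [this, fourierCoeff_liftIco_eq]
    simp only [zero_add]
    exact coeff_integral ρ hρ n
  have hP := tsum_sq_fourierCoeff (ContinuousMap.toLp (E := ℂ) 2 AddCircle.haarAddCircle ℂ G)
  simp_rw [fourierCoeff_toLp, hcoeff] at hP
  rw [hP]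
  have hae : (fun t => ‖(ContinuousMap.toLp (E := ℂ) 2 AddCircle.haarAddCircle ℂ G : AddCircle (1:ℝ) → ℂ) t‖^2)
      =ᵐ[(AddCircle.haarAddCircle : Measure (AddCircle (1:ℝ)))] (fun t => ‖G t‖^2) := by
    filter_upwards [ContinuousMap.coeFn_toAEEqFun AddCircle.haarAddCircle G] with t ht
    rw [show (ContinuousMap.toLp (E := ℂ) 2 AddCircle.haarAddCircle ℂ G : AddCircle (1:ℝ) → ℂ) t
        = (G.toAEEqFun AddCircle.haarAddCircle : AddCircle (1:ℝ) → ℂ) t from rfl, ht]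
  rw [integral_congr_ae hae]
  have hvol : (volume : Measure (AddCircle (1:ℝ))) = AddCircle.haarAddCircle := by
    rw [AddCircle.volume_eq_smul_haarAddCircle]; simp
  rw [← hvol, ← AddCircle.intervalIntegral_preimage 1 0 (fun t => ‖G t‖^2)]
  have hcong : ∀ x ∈ Set.uIcc (0:ℝ) 1,
      ‖G ((x : ℝ) : AddCircle (1:ℝ))‖^2 = (Real.cosh (ρ * (x - 1/2)))^2 := by
    intro x hx
    rw [Set.uIcc_of_le (by norm_num : (0:ℝ) ≤ 1)] at hx
    have hGx : G ((x : ℝ) : AddCircle (1:ℝ)) = gfun ρ x := by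
      rcases lt_or_eq_of_le hx.2 with h1 | h1
      · show AddCircle.liftIco 1 0 (gfun ρ) ((x:ℝ) : AddCircle (1:ℝ)) = gfun ρ x
        exact AddCircle.liftIco_zero_coe_apply ⟨hx.1, h1⟩
      · subst h1
        have : ((1 : ℝ) : AddCircle (1:ℝ)) = ((0 : ℝ) : AddCircle (1:ℝ)) := by
          simp [AddCircle]
        rw [hG]
        show AddCircle.liftIco 1 0 (gfun ρ) ((1:ℝ) : AddCircle (1:ℝ)) = gfun ρ 1
        rw [this, AddCircle.liftIco_zero_coe_apply (by norm_num : (0:ℝ) ∈ Set.Ico (0:ℝ) 1)]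
        simpa using gfun_endpoints ρ
    rw [hGx]
    simp only [gfun, Complex.norm_real, Real.norm_eq_abs, sq_abs]
  rw [show (0:ℝ) + 1 = 1 by norm_num, intervalIntegral.integral_congr hcong]
  exact cosh_sq_integral ρ hρ

lemma summable_base (ρ : ℝ) (hρ : 0 < ρ) :
    Summable (fun j : ℕ => (2*ρ/(ρ^2+(2*π*((j:ℝ)+1))^2))^2) := by
  have h4 : Summable (fun j : ℕ => ((2*ρ)^2/(2*π)^4) * (1/((j:ℝ)+1)^4)) := by
    apply Summable.mul_left
    have h := (Real.summable_one_div_nat_pow (p := 4)).mpr (by norm_num)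
    have h2 := (summable_nat_add_iff 1).mpr h
    simpa using h2
  apply Summable.of_nonneg_of_le (fun j => sq_nonneg _) _ h4
  intro j
  have hπ := Real.pi_pos
  have hden : (0:ℝ) < (2*π*((j:ℝ)+1))^2 := by positivity
  rw [show ((2*ρ)^2/(2*π)^4)*(1/((j:ℝ)+1)^4) = (2*ρ)^2/((2*π*((j:ℝ)+1))^2)^2 by
    field_simp]
  rw [div_pow]
  gcongr <;> nlinarith [sq_nonneg ρ]

theorem G2_closed_form (ρ : ℝ) (hρ : 0 < ρ) :
    ∑' j : ℕ, (2 * ρ / ((2 * π * (j + 1)) ^ 2 + ρ ^ 2)) ^ 2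
      = (ρ ^ 2 + ρ * Real.sinh ρ - 4 * Real.cosh ρ + 4)
        / (2 * ρ ^ 2 * (Real.cosh ρ - 1)) := by
  have hπ := Real.pi_pos
  set s := Real.sinh (ρ/2) with hs
  set q : ℤ → ℝ := fun n => s^2 * (2*ρ/(ρ^2+(2*π*(n:ℝ))^2))^2 with hqdef
  set S := ∑' j : ℕ, (2 * ρ / ((2 * π * ((j:ℝ) + 1)) ^ 2 + ρ ^ 2)) ^ 2 with hSdef
  have base := summable_base ρ hρ
  have hbase' : Summable (fun j : ℕ => s^2 * (2*ρ/(ρ^2+(2*π*((j:ℝ)+1))^2))^2) :=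
    base.mul_left _
  have hs1 : Summable (fun n : ℕ => q n) := by
    apply (summable_nat_add_iff 1).mp
    apply Summable.congr hbase'
    intro n
    simp only [hqdef]
    push_cast
    ring
  have hs2 : Summable (fun n : ℕ => q (-((n:ℤ)+1))) := by
    apply Summable.congr hbase'
    intro n
    simp only [hqdef]
    push_cast
    ring
  have hq : ∀ n : ℤ, ‖((Real.sinh (ρ/2) * (2 * ρ / (ρ^2 + (2*π*(n:ℝ))^2)) : ℝ) : ℂ)‖^2 = q n := by
    intro n
    rw [Complex.norm_real, Real.norm_eq_abs, sq_abs, hqdef]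
    ring
  have hP := parseval_eq ρ hρ
  simp_rw [hq] at hP
  rw [tsum_of_nat_of_neg_add_one hs1 hs2, Summable.tsum_eq_zero_add hs1] at hP
  have e1 : ∑' n : ℕ, q ((n:ℤ)+1) = s^2 * S := by
    rw [hSdef, ← tsum_mul_left]
    apply tsum_congr
    intro n
    simp only [hqdef]
    push_cast
    ring
  have e2 : ∑' n : ℕ, q (-((n:ℤ)+1)) = s^2 * S := by
    rw [hSdef, ← tsum_mul_left]
    apply tsum_congr
    intro n
    simp only [hqdef]
    push_cast
    ring
  have hq0 : q 0 = 4 * s^2 / ρ^2 := by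
    simp only [hqdef]
    push_cast
    field_simp
    ring
  rw [show ((0:ℕ):ℤ) = 0 from rfl] at hP
  rw [hq0] at hP
  have e1' : ∑' n : ℕ, q (((n:ℕ):ℤ)+1) = s^2 * S := e1
  rw [show (fun n : ℕ => q ((n:ℕ)+1 : ℕ)) = (fun n : ℕ => q (((n:ℕ):ℤ)+1)) from
    funext fun n => by push_cast; ring_nf, e1', e2] at hP
  -- hP : 4*s^2/ρ^2 + s^2*S + s^2*S = 1/2 + sinh ρ/(2ρ)
  have hsne : s ≠ 0 := ne_of_gt (Real.sinh_pos_iff.mpr (by positivity))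
  have hcoshρ : Real.cosh ρ = 1 + 2*s^2 := by
    rw [hs, show ρ = 2*(ρ/2) by ring, Real.cosh_two_mul, Real.cosh_sq]
    ring_nf
  have hsinhρ : Real.sinh ρ = 2 * s * Real.cosh (ρ/2) := by
    rw [hs, show ρ = 2*(ρ/2) by ring, Real.sinh_two_mul]
    ring_nf
  rw [hsinhρ] at hP
  rw [hcoshρ, hsinhρ]
  have hS : S = (1/2 + 2*s*Real.cosh (ρ/2)/(2*ρ) - 4*s^2/ρ^2)/(2*s^2) := by
    rw [eq_div_iff (by positivity)]
    linear_combination hP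
  rw [hS]
  field_simp
  ring
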